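/- For all real numbers a > 0 and b > 0, the integral over s ∈ (0, ∞) of s^(−1/2) · exp(−(a·s + b/s)/2) with respect to s equals √(2π/a) · exp(−√(a·b)). -/

import Mathlib

open MeasureTheory Real
open Set

-- inversion map image
lemma inv_image_Ioi (c : ℝ) (hc : 0 < c) : (fun t : ℝ => c / t) '' Ioi 0 = Ioi 0 := by
  ext x
  constructor
  · rintro ⟨t, ht, rfl⟩
    exact div_pos hc ht
  · intro hx
    exact ⟨c / x, div_pos hc hx, by field_simp⟩

lemma integrableOn_glasser {α β : ℝ} (hα : 0 < α) (hβ : 0 < β) :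
    IntegrableOn (fun t : ℝ => Real.exp (-(α * t ^ 2 + β / t ^ 2))) (Ioi 0) := by
  have hmeas : AEStronglyMeasurable (fun t : ℝ => Real.exp (-(α * t ^ 2 + β / t ^ 2)))
      (volume.restrict (Ioi 0)) := by
    apply ContinuousOn.aestronglyMeasurable _ measurableSet_Ioi
    apply Real.continuous_exp.comp_continuousOn
    apply ContinuousOn.neg
    apply ContinuousOn.add
    · exact (continuous_const.mul (continuous_pow 2)).continuousOn
    · exact continuousOn_const.div (continuous_pow 2).continuousOn
        (fun t ht => pow_ne_zero _ (ne_of_gt ht))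
  have hint : Integrable (fun t : ℝ => Real.exp (-α * t ^ 2)) :=
    integrable_exp_neg_mul_sq hα
  refine (hint.integrableOn).mono' hmeas ?_
  filter_upwards [ae_restrict_mem measurableSet_Ioi] with t ht
  rw [Real.norm_eq_abs, abs_of_pos (Real.exp_pos _)]
  apply Real.exp_le_exp.2
  have : 0 ≤ β / t ^ 2 := le_of_lt (div_pos hβ (pow_pos ht 2))
  nlinarith

lemma glasser (α β : ℝ) (hα : 0 < α) (hβ : 0 < β) :
    ∫ t in Ioi (0:ℝ), Real.exp (-(α * t ^ 2 + β / t ^ 2))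
      = Real.sqrt (π / α) / 2 * Real.exp (-2 * Real.sqrt (α * β)) := by
  set g : ℝ → ℝ := fun t => Real.exp (-(α * t ^ 2 + β / t ^ 2)) with hg
  set c : ℝ := Real.sqrt (β / α) with hcdef
  have hc : 0 < c := Real.sqrt_pos.2 (div_pos hβ hα)
  have hc2 : c ^ 2 = β / α := Real.sq_sqrt (le_of_lt (div_pos hβ hα))
  have hsa : 0 < Real.sqrt α := Real.sqrt_pos.2 hα
  have hsb : 0 < Real.sqrt β := Real.sqrt_pos.2 hβ
  -- inversion substitution : ∫ g = c * ∫ t⁻² g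
  have hderiv_inv : ∀ t ∈ Ioi (0:ℝ),
      HasDerivWithinAt (fun t : ℝ => c / t) (-(c / t ^ 2)) (Ioi 0) t := by
    intro t ht
    have : HasDerivAt (fun t : ℝ => c / t) (-(c / t ^ 2)) t := by
      simpa [div_eq_mul_inv, mul_comm, neg_div] using
        ((hasDerivAt_inv (ne_of_gt ht)).const_mul c)
    exact this.hasDerivWithinAt
  have hinj_inv : InjOn (fun t : ℝ => c / t) (Ioi 0) := by
    intro x hx y hy h
    simp only at h
    rw [div_eq_div_iff (ne_of_gt hx) (ne_of_gt hy)] at h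
    exact (mul_left_cancel₀ (ne_of_gt hc) h).symm
  have hinv := integral_image_eq_integral_abs_deriv_smul measurableSet_Ioi hderiv_inv hinj_inv g
  rw [inv_image_Ioi c hc] at hinv
  have hinv' : ∫ t in Ioi (0:ℝ), g t = c * ∫ t in Ioi (0:ℝ), (t ^ 2)⁻¹ * g t := by
    rw [hinv, ← integral_const_mul]
    apply setIntegral_congr_fun measurableSet_Ioi
    intro t ht
    have ht2 : (0:ℝ) < t ^ 2 := pow_pos ht 2
    have hct : (0:ℝ) < c / t := div_pos hc ht
    have hgct : g (c / t) = g t := by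
      simp only [hg]
      congr 1
      have : (c / t) ^ 2 = (β / α) / t ^ 2 := by rw [div_pow, hc2]
      rw [this]
      field_simp
      ring
    simp only [smul_eq_mul, abs_neg, abs_of_pos (div_pos hc ht2), hgct]
    ring
  -- integrability of t⁻² g
  have hI : IntegrableOn g (Ioi 0) := integrableOn_glasser hα hβ
  have hK : IntegrableOn (fun t : ℝ => (t ^ 2)⁻¹ * g t) (Ioi 0) := by
    have := (integrableOn_image_iff_integrableOn_abs_deriv_smul measurableSet_Ioi
      hderiv_inv hinj_inv g).1 (by rwa [inv_image_Ioi c hc])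
    have h2 : IntegrableOn (fun t : ℝ => c * ((t ^ 2)⁻¹ * g t)) (Ioi 0) := by
      apply this.congr_fun _ measurableSet_Ioi
      intro t ht
      have ht2 : (0:ℝ) < t ^ 2 := pow_pos ht 2
      have hgct : g (c / t) = g t := by
        simp only [hg]
        congr 1
        have : (c / t) ^ 2 = (β / α) / t ^ 2 := by rw [div_pow, hc2]
        rw [this]
        field_simp
        ring
      simp only [smul_eq_mul, abs_neg, abs_of_pos (div_pos hc ht2), hgct]
      ring
    have h3 : IntegrableOn (fun t : ℝ => c⁻¹ * (c * ((t ^ 2)⁻¹ * g t))) (Ioi 0) :=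
      h2.const_mul c⁻¹
    apply h3.congr_fun _ measurableSet_Ioi
    intro t ht
    field_simp
  -- Glasser substitution f t = √α t - √β / t
  set f : ℝ → ℝ := fun t => Real.sqrt α * t - Real.sqrt β / t with hf
  have hderiv_f : ∀ t ∈ Ioi (0:ℝ),
      HasDerivWithinAt f (Real.sqrt α + Real.sqrt β / t ^ 2) (Ioi 0) t := by
    intro t ht
    have h1 : HasDerivAt (fun t : ℝ => Real.sqrt α * t) (Real.sqrt α) t := by
      simpa using (hasDerivAt_id t).const_mul (Real.sqrt α)
    have h2 : HasDerivAt (fun t : ℝ => Real.sqrt β / t) (-(Real.sqrt β / t ^ 2)) t := by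
      simpa [div_eq_mul_inv, mul_comm, neg_div] using
        ((hasDerivAt_inv (ne_of_gt ht)).const_mul (Real.sqrt β))
    have h3 := (h1.sub h2).hasDerivWithinAt (s := Ioi 0)
    rw [sub_neg_eq_add] at h3
    exact h3
  have hmono : StrictMonoOn f (Ioi 0) := by
    intro x hx y hy hxy
    simp only [hf]
    have h1 : Real.sqrt α * x < Real.sqrt α * y := by
      exact mul_lt_mul_of_pos_left hxy hsa
    have h2 : Real.sqrt β / y ≤ Real.sqrt β / x :=
      div_le_div_of_nonneg_left (le_of_lt hsb) hx hxy.le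
    linarith
  have hsurj : f '' Ioi 0 = univ := by
    apply eq_univ_of_forall
    intro y
    set D : ℝ := Real.sqrt (y ^ 2 + 4 * Real.sqrt (α * β)) with hD
    have hab : 0 < Real.sqrt (α * β) := Real.sqrt_pos.2 (mul_pos hα hβ)
    have hD2 : D ^ 2 = y ^ 2 + 4 * Real.sqrt (α * β) :=
      Real.sq_sqrt (by nlinarith [sq_nonneg y])
    have hDy : |y| < D := by
      rw [← Real.sqrt_sq_eq_abs]
      apply Real.sqrt_lt_sqrt (sq_nonneg y)
      nlinarith
    set t : ℝ := (y + D) / (2 * Real.sqrt α) with ht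
    have htpos : 0 < t := by
      apply div_pos _ (by positivity)
      have := abs_lt.1 hDy
      linarith [this.1]
    refine ⟨t, htpos, ?_⟩
    have hsab : Real.sqrt α * Real.sqrt β = Real.sqrt (α * β) :=
      (Real.sqrt_mul (le_of_lt hα) β).symm
    have key : Real.sqrt α * t ^ 2 - y * t - Real.sqrt β = 0 := by
      have h2a : (2 * Real.sqrt α) ≠ 0 := by positivity
      have e : Real.sqrt α * t ^ 2 - y * t - Real.sqrt β
          = (D ^ 2 - y ^ 2 - 4 * (Real.sqrt α * Real.sqrt β)) / (4 * Real.sqrt α) := by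
        rw [ht]
        field_simp
        ring
      rw [e, hsab, hD2]
      ring
    simp only [hf]
    field_simp
    nlinarith [key]
  have hglasser := integral_image_eq_integral_abs_deriv_smul measurableSet_Ioi hderiv_f
    (hmono.injOn) (fun u => Real.exp (-(u ^ 2 + 2 * Real.sqrt (α * β))))
  rw [hsurj] at hglasser
  -- LHS of hglasser
  have hLHS : ∫ u in (univ : Set ℝ), Real.exp (-(u ^ 2 + 2 * Real.sqrt (α * β)))
      = Real.sqrt π * Real.exp (-2 * Real.sqrt (α * β)) := by
    rw [setIntegral_univ]
    have : ∀ u : ℝ, Real.exp (-(u ^ 2 + 2 * Real.sqrt (α * β)))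
        = Real.exp (-2 * Real.sqrt (α * β)) * Real.exp (-1 * u ^ 2) := by
      intro u
      rw [← Real.exp_add]
      ring_nf
    simp_rw [this]
    rw [integral_const_mul]
    have : ∫ x : ℝ, Real.exp (-1 * x ^ 2) = Real.sqrt (π / 1) := integral_gaussian 1
    rw [this]
    simp [mul_comm]
  -- RHS of hglasser
  have habs : ∀ t ∈ Ioi (0:ℝ),
      |Real.sqrt α + Real.sqrt β / t ^ 2| • Real.exp (-(f t ^ 2 + 2 * Real.sqrt (α * β)))
      = Real.sqrt α * g t + Real.sqrt β * ((t ^ 2)⁻¹ * g t) := by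
    intro t ht
    have ht2 : (0:ℝ) < t ^ 2 := pow_pos ht 2
    have hft : f t ^ 2 + 2 * Real.sqrt (α * β) = α * t ^ 2 + β / t ^ 2 := by
      simp only [hf]
      have h1 : Real.sqrt α ^ 2 = α := Real.sq_sqrt hα.le
      have h2 : Real.sqrt β ^ 2 = β := Real.sq_sqrt hβ.le
      have h3 : Real.sqrt α * Real.sqrt β = Real.sqrt (α * β) :=
        (Real.sqrt_mul (le_of_lt hα) β).symm
      have hu : t * t⁻¹ = 1 := mul_inv_cancel₀ (ne_of_gt ht)
      rw [div_eq_mul_inv (Real.sqrt β), div_eq_mul_inv β, ← inv_pow, ← h3]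
      linear_combination t ^ 2 * h1 + (t⁻¹) ^ 2 * h2 - 2 * Real.sqrt α * Real.sqrt β * hu
    rw [hft]
    have : |Real.sqrt α + Real.sqrt β / t ^ 2| = Real.sqrt α + Real.sqrt β / t ^ 2 :=
      abs_of_pos (by positivity)
    rw [this]
    simp only [smul_eq_mul, hg]
    ring
  have hRHS : ∫ t in Ioi (0:ℝ),
      |Real.sqrt α + Real.sqrt β / t ^ 2| • Real.exp (-(f t ^ 2 + 2 * Real.sqrt (α * β)))
      = Real.sqrt α * (∫ t in Ioi (0:ℝ), g t)
        + Real.sqrt β * (∫ t in Ioi (0:ℝ), (t ^ 2)⁻¹ * g t) := by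
    rw [setIntegral_congr_fun measurableSet_Ioi habs]
    rw [integral_add ((hI.const_mul _)) ((hK.const_mul _))]
    rw [integral_const_mul, integral_const_mul]
  -- combine
  have hsbc : Real.sqrt β / c = Real.sqrt α := by
    rw [hcdef, Real.sqrt_div hβ.le]
    field_simp
  have hKI : Real.sqrt β * (∫ t in Ioi (0:ℝ), (t ^ 2)⁻¹ * g t)
      = Real.sqrt α * ∫ t in Ioi (0:ℝ), g t := by
    have : (∫ t in Ioi (0:ℝ), (t ^ 2)⁻¹ * g t) = (∫ t in Ioi (0:ℝ), g t) / c := by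
      rw [hinv']
      field_simp
    rw [this, ← hsbc]
    field_simp
  have key : Real.sqrt π * Real.exp (-2 * Real.sqrt (α * β))
      = 2 * Real.sqrt α * ∫ t in Ioi (0:ℝ), g t := by
    rw [← hLHS, hglasser, hRHS, hKI]
    ring
  have hπα : Real.sqrt (π / α) = Real.sqrt π / Real.sqrt α := Real.sqrt_div pi_pos.le α
  have : ∫ t in Ioi (0:ℝ), g t
      = Real.sqrt π * Real.exp (-2 * Real.sqrt (α * β)) / (2 * Real.sqrt α) := by
    field_simp at key ⊢
    linarith
  rw [this, hπα]
  ring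

theorem gig_half_integral (a b : ℝ) (ha : 0 < a) (hb : 0 < b) :
    ∫ s in Set.Ioi (0 : ℝ), s ^ (-(1 : ℝ) / 2) * Real.exp (-(a * s + b / s) / 2)
      = Real.sqrt (2 * π / a) * Real.exp (-Real.sqrt (a * b)) := by
  have hsub := integral_comp_rpow_Ioi_of_pos
    (g := fun s : ℝ => s ^ (-(1:ℝ)/2) * Real.exp (-(a * s + b / s) / 2)) (two_pos (α := ℝ))
  rw [← hsub]
  have heq : ∀ x ∈ Ioi (0:ℝ),
      ((2:ℝ) * x ^ ((2:ℝ) - 1)) • ((x ^ (2:ℝ)) ^ (-(1:ℝ)/2)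
        * Real.exp (-(a * x ^ (2:ℝ) + b / x ^ (2:ℝ)) / 2))
      = 2 * Real.exp (-(a / 2 * x ^ 2 + (b / 2) / x ^ 2)) := by
    intro x hx
    have hx0 : (0:ℝ) < x := hx
    have h1 : x ^ ((2:ℝ) - 1) = x := by
      norm_num
    have h2 : x ^ ((2:ℝ)) = x ^ (2:ℕ) := by
      rw [show ((2:ℝ)) = ((2:ℕ):ℝ) by norm_num, Real.rpow_natCast]
    have h3 : (x ^ (2:ℝ)) ^ (-(1:ℝ)/2) = x⁻¹ := by
      rw [← Real.rpow_mul hx0.le]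
      norm_num [Real.rpow_neg_one]
    have h4 : Real.exp (-(a * x ^ (2:ℝ) + b / x ^ (2:ℝ)) / 2)
        = Real.exp (-(a / 2 * x ^ 2 + (b / 2) / x ^ 2)) := by
      rw [h2]
      congr 1
      field_simp
    rw [h1, h3, h4, smul_eq_mul]
    field_simp
  rw [setIntegral_congr_fun measurableSet_Ioi heq, integral_const_mul,
    glasser (a / 2) (b / 2) (half_pos ha) (half_pos hb)]
  have e1 : π / (a / 2) = 2 * π / a := by
    field_simp
  have e2 : Real.sqrt (a / 2 * (b / 2)) = Real.sqrt (a * b) / 2 := by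
    rw [show a / 2 * (b / 2) = (a * b) / 4 by ring,
      Real.sqrt_div (mul_pos ha hb).le,
      show (4:ℝ) = 2 ^ 2 by norm_num, Real.sqrt_sq two_pos.le]
  rw [e1, e2]
  ring_nf
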